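/- Let α be a measurable space equipped with a measure μα, let β be a type and n : ℕ. Let f : (Fin n → α) → β → ℝ satisfy f v w > 0 for all v and w (strict positivity), and suppose that for every i : Fin n, v : Fin n → α, and w : β, the function t ↦ f (Function.update v i t) w is integrable with respect to μα and its integral is strictly positive. Define the conditional density of coordinate i at value a, given the remaining coordinates of v and the conditioning fields w, by cd i a v w := f (Function.update v i a) w / ∫ t, f (Function.update v i t) w ∂μα. Then for all y x : Fin n → α and all w : β, f y w / f x w = ∏ i : Fin n, (cd i (y i) (u i) w) / (cd i (x i) (u i) w), where for each i : Fin n the hybrid configuration u i : Fin n → α is defined by u i j = if (j : ℕ) < (i : ℕ) then y j else x j. -/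
import Mathlib


open MeasureTheory

/-- The conditional density of coordinate `i` at value `a`, given the remaining
coordinates of `v` and the conditioning fields `w`:
`cd i a v w = f (update v i a) w / ∫ t, f (update v i t) w`. -/
noncomputable def cd {α β : Type*} [MeasurableSpace α] (μα : Measure α) {n : ℕ}
    (f : (Fin n → α) → β → ℝ) (i : Fin n) (a : α) (v : Fin n → α) (w : β) : ℝ :=
  f (Function.update v i a) w / ∫ t, f (Function.update v i t) w ∂μα

theorem hammersley_clifford_colwise
    {α β : Type*} [MeasurableSpace α] (μα : Measure α) {n : ℕ}
    (f : (Fin n → α) → β → ℝ)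
    (hpos : ∀ (v : Fin n → α) (w : β), 0 < f v w)
    (hint : ∀ (i : Fin n) (v : Fin n → α) (w : β),
      Integrable (fun t => f (Function.update v i t) w) μα)
    (hintpos : ∀ (i : Fin n) (v : Fin n → α) (w : β),
      0 < ∫ t, f (Function.update v i t) w ∂μα)
    (y x : Fin n → α) (w : β)
    (u : Fin n → Fin n → α)
    (hu : ∀ i j : Fin n, u i j = if (j : ℕ) < (i : ℕ) then y j else x j) :
    f y w / f x w =
      ∏ i : Fin n, (cd μα f i (y i) (u i) w) / (cd μα f i (x i) (u i) w) := by
  set F : ℕ → ℝ := fun k => f (fun j => if (j : ℕ) < k then y j else x j) w with hF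
  have hFne : ∀ k, F k ≠ 0 := fun k => (hpos _ _).ne'
  have tele : ∀ m : ℕ, ∏ i ∈ Finset.range m, F (i + 1) / F i = F m / F 0 := by
    intro m
    induction m with
    | zero => rw [Finset.prod_range_zero, div_self (hFne 0)]
    | succ m ih =>
      rw [Finset.prod_range_succ, ih, div_mul_div_comm, mul_comm (F 0) (F m),
        mul_div_mul_left _ _ (hFne m)]
  have key : ∀ i : Fin n,
      cd μα f i (y i) (u i) w / cd μα f i (x i) (u i) w = F (i + 1) / F i := by
    intro i
    have hI : (∫ t, f (Function.update (u i) i t) w ∂μα) ≠ 0 := (hintpos i (u i) w).ne'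
    have h1 : Function.update (u i) i (y i) = fun j : Fin n => if (j : ℕ) < (i : ℕ) + 1 then y j else x j := by
      funext j
      by_cases hj : j = i
      · subst hj; simp
      · rw [Function.update_of_ne hj, hu]
        have : (j : ℕ) ≠ (i : ℕ) := fun h => hj (Fin.ext h)
        by_cases h : (j : ℕ) < (i : ℕ)
        · simp [h, Nat.lt_succ_of_lt h]
        · have h2 : ¬ (j : ℕ) < (i : ℕ) + 1 := by omega
          simp [h, h2]
    have h2 : Function.update (u i) i (x i) = fun j : Fin n => if (j : ℕ) < (i : ℕ) then y j else x j := by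
      funext j
      by_cases hj : j = i
      · subst hj; simp
      · rw [Function.update_of_ne hj, hu]
    have haux : ∀ a b c : ℝ, c ≠ 0 → (a / c) / (b / c) = a / b := by
      intro a b c hc; field_simp
    unfold cd
    rw [h1, h2, haux _ _ _ hI]
  rw [Finset.prod_congr rfl (fun i _ => key i)]
  have hy : f y w = F n := by
    simp only [hF]
    congr 1
    funext j
    simp [j.isLt]
  have hx : f x w = F 0 := by simp [hF]
  rw [hy, hx, Fin.prod_univ_eq_prod_range (fun i => F (i + 1) / F i) n, tele]
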